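/- Let Θ be the set ℚ² (thought of as the edges [U,U]\U·𝔠 indexed by ε), and consider formal ℚ-linear combinations Σ_j α_j · g_j with g_j ∈ ℚ² distinct and α_j ≠ 0, which are 'cycles' in the sense that for each i ∈ {1,2} and each value v, the sum of α_j over all j with (g_j)_i' = v for the complementary coordinate pattern vanishes (i.e., the formal boundary over type-1 and type-2 vertices is zero). Then any such cycle R equals Σ_j α_j · S(g_j), where S(g) = Σ_{θ⊆{1,2}} (−1)^{|θ|} g^θ. In particular the elements S(g), g ∈ ℚ², generate the space of cycles. -/
import Mathlib


/-- any 1-cycle R = Σ α_j g_j in Θ (edges indexed by ℚ², with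
vanishing boundary over type-1 and type-2 vertices) equals Σ_j α_j S(g_j),
where S(g) = Σ_{θ⊆{1,2}} (−1)^{|θ|} g^θ. -/
theorem stmt_15 (R : (ℚ × ℚ) →₀ ℚ)
    (h1 : ∀ v : ℚ, ∑ p ∈ R.support.filter (fun p => p.1 = v), R p = 0)
    (h2 : ∀ v : ℚ, ∑ p ∈ R.support.filter (fun p => p.2 = v), R p = 0) :
    R = ∑ p ∈ R.support, R p •
      (Finsupp.single p (1 : ℚ) - Finsupp.single (p.1, (0 : ℚ)) 1
        - Finsupp.single ((0 : ℚ), p.2) 1 + Finsupp.single ((0 : ℚ), (0 : ℚ)) 1) := by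
  have total : ∑ p ∈ R.support, R p = 0 := by
    rw [← Finset.sum_fiberwise_of_maps_to (g := Prod.fst) (t := R.support.image Prod.fst)
      (fun x hx => Finset.mem_image_of_mem _ hx)]
    exact Finset.sum_eq_zero fun v _ => h1 v
  have key1 : ∑ p ∈ R.support, R p • (Finsupp.single (p.1, (0:ℚ)) (1:ℚ)) = 0 := by
    ext q
    rw [Finsupp.finset_sum_apply]
    simp only [Finsupp.smul_apply, Finsupp.single_apply, smul_eq_mul, mul_ite, mul_one, mul_zero,
      Finsupp.coe_zero, Pi.zero_apply]
    rw [← Finset.sum_filter]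
    by_cases hq : q.2 = 0
    · have : R.support.filter (fun p => (p.1, (0:ℚ)) = q) =
        R.support.filter (fun p => p.1 = q.1) := by
        apply Finset.filter_congr
        intro p _
        constructor
        · intro h; rw [← h]
        · intro h; rw [Prod.ext_iff]; exact ⟨h, hq.symm⟩
      rw [this]; exact h1 q.1
    · rw [Finset.filter_false_of_mem, Finset.sum_empty]
      intro p _ h
      exact hq (by rw [← h])
  have key2 : ∑ p ∈ R.support, R p • (Finsupp.single ((0:ℚ), p.2) (1:ℚ)) = 0 := by
    ext q
    rw [Finsupp.finset_sum_apply]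
    simp only [Finsupp.smul_apply, Finsupp.single_apply, smul_eq_mul, mul_ite, mul_one, mul_zero,
      Finsupp.coe_zero, Pi.zero_apply]
    rw [← Finset.sum_filter]
    by_cases hq : q.1 = 0
    · have : R.support.filter (fun p => ((0:ℚ), p.2) = q) =
        R.support.filter (fun p => p.2 = q.2) := by
        apply Finset.filter_congr
        intro p _
        constructor
        · intro h; rw [← h]
        · intro h; rw [Prod.ext_iff]; exact ⟨hq.symm, h⟩
      rw [this]; exact h2 q.2
    · rw [Finset.filter_false_of_mem, Finset.sum_empty]
      intro p _ h
      exact hq (by rw [← h])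
  have key3 : ∑ p ∈ R.support, R p • (Finsupp.single ((0:ℚ), (0:ℚ)) (1:ℚ)) = 0 := by
    rw [← Finset.sum_smul, total, zero_smul]
  have key0 : ∑ p ∈ R.support, R p • (Finsupp.single p (1:ℚ)) = R := by
    conv_rhs => rw [← Finsupp.sum_single R]
    rw [Finsupp.sum]
    exact Finset.sum_congr rfl fun p _ => by rw [Finsupp.smul_single', mul_one]
  simp only [smul_sub, smul_add]
  rw [Finset.sum_add_distrib, Finset.sum_sub_distrib, Finset.sum_sub_distrib,
    key0, key1, key2, key3, sub_zero, sub_zero, add_zero]
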